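/- Let U ⊆ ℝ^N be an open set, D : U → ℝ^N a continuously differentiable map whose Jacobian J_D(p) satisfies σ_min(J_D(p)) ≥ σ_D > 0 for all p ∈ U, and H : ℝ^N → ℝ a continuously differentiable σ_φ-strongly concave function. Define G : U → ℝ by G(p) = H(D(p)), and suppose p* ∈ U satisfies ∇H(D(p*)) = 0 (so p* maximizes G). Then for every p ∈ U, (1/2) ‖∇G(p)‖₂² ≥ σ_D² σ_φ ( G(p*) − G(p) ). -/

import Mathlib

open scoped RealInnerProductSpace

private lemma inner_gradient_eq {N : ℕ} (f : EuclideanSpace ℝ (Fin N) → ℝ)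
    (x v : EuclideanSpace ℝ (Fin N)) :
    ⟪gradient f x, v⟫ = fderiv ℝ f x v := by
  simp [gradient, InnerProductSpace.toDual_symm_apply]

/-- First-order condition for strongly concave C¹ functions. -/
private lemma strong_concave_foc {N : ℕ} {σφ : ℝ}
    {H : EuclideanSpace ℝ (Fin N) → ℝ}
    (hHC1 : ContDiff ℝ 1 H) (hHconc : StrongConcaveOn Set.univ σφ H)
    (x y : EuclideanSpace ℝ (Fin N)) :
    H y + σφ / 2 * ‖y - x‖ ^ 2 ≤ H x + ⟪gradient H x, y - x⟫ := by
  set v : EuclideanSpace ℝ (Fin N) := y - x with hv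
  set K : EuclideanSpace ℝ (Fin N) → ℝ := fun z => H z + σφ / 2 * ‖z‖ ^ 2 with hK
  have concK : ConcaveOn ℝ Set.univ K := strongConcaveOn_iff_convex.mp hHconc
  -- convexity of the negated 1D restriction
  have convf : ConvexOn ℝ Set.univ (fun t : ℝ => -(K (t • v + x))) := by
    have h := (concK.comp_affineMap (AffineMap.lineMap x (x + v))).neg
    have heq : (fun t : ℝ => -(K (t • v + x)))
        = -(K ∘ (AffineMap.lineMap x (x + v))) := by
      funext t
      simp [AffineMap.lineMap_apply_module]
      congr 1
      module
    rw [heq]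
    simpa using h
  -- derivative of the 1D restriction at 0
  have h0 : (0 : ℝ) • v + x = x := by simp
  have hline : HasDerivAt (fun t : ℝ => t • v + x) v 0 := by
    simpa using ((hasDerivAt_id (0 : ℝ)).smul_const v).add_const x
  have hFD : HasFDerivAt H (fderiv ℝ H x) ((0 : ℝ) • v + x) := by
    rw [h0]; exact (hHC1.differentiable one_ne_zero x).hasFDerivAt
  have hd1 : HasDerivAt (fun t : ℝ => H (t • v + x)) (fderiv ℝ H x v) 0 :=
    hFD.comp_hasDerivAt 0 hline
  have hq : ∀ t : ℝ, ‖t • v + x‖ ^ 2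
      = ‖x‖ ^ 2 + 2 * ⟪x, v⟫ * t + ‖v‖ ^ 2 * t ^ 2 := by
    intro t
    rw [norm_add_sq_real, norm_smul, real_inner_smul_left, real_inner_comm v x]
    simp [mul_pow, sq_abs]
    ring
  have hpoly : HasDerivAt
      (fun t : ℝ => σφ / 2 * (‖x‖ ^ 2 + 2 * ⟪x, v⟫ * t + ‖v‖ ^ 2 * t ^ 2))
      (σφ * ⟪x, v⟫) 0 := by
    have h := ((((hasDerivAt_id (0 : ℝ)).const_mul (2 * ⟪x, v⟫)).const_add
      (‖x‖ ^ 2)).add ((hasDerivAt_pow 2 (0 : ℝ)).const_mul (‖v‖ ^ 2))).const_mul (σφ / 2)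
    refine h.congr_deriv ?_
    push_cast
    ring
  have hd2 : HasDerivAt (fun t : ℝ => σφ / 2 * ‖t • v + x‖ ^ 2) (σφ * ⟪x, v⟫) 0 := by
    simpa only [← hq] using hpoly
  have hf' : HasDerivAt (fun t : ℝ => -(K (t • v + x)))
      (-(fderiv ℝ H x v + σφ * ⟪x, v⟫)) 0 := (hd1.add hd2).neg
  have hslope := convf.le_slope_of_hasDerivAt (Set.mem_univ (0 : ℝ))
    (Set.mem_univ (1 : ℝ)) one_pos hf'
  have hslope' : -(fderiv ℝ H x v + σφ * ⟪x, v⟫)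
      ≤ -(K ((1 : ℝ) • v + x)) - -(K ((0 : ℝ) • v + x)) := by
    simpa [slope_def_field] using hslope
  have h1 : (1 : ℝ) • v + x = y := by rw [one_smul, hv]; abel
  rw [h0, h1] at hslope'
  have hKineq : K y - K x ≤ fderiv ℝ H x v + σφ * ⟪x, v⟫ := by linarith
  rw [inner_gradient_eq]
  have hnorm : ‖y - x‖ ^ 2 = ‖y‖ ^ 2 - 2 * ⟪y, x⟫ + ‖x‖ ^ 2 := norm_sub_sq_real y x
  have hxv : ⟪x, v⟫ = ⟪y, x⟫ - ‖x‖ ^ 2 := by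
    rw [hv, inner_sub_right, real_inner_self_eq_norm_sq, real_inner_comm]
  simp only [hK] at hKineq
  rw [hnorm]
  rw [hxv] at hKineq
  linarith

set_option maxHeartbeats 1000000 in
theorem stmt_5 {N : ℕ}
    (U : Set (EuclideanSpace ℝ (Fin N))) (hU : IsOpen U)
    (D : EuclideanSpace ℝ (Fin N) → EuclideanSpace ℝ (Fin N))
    (hD : ContDiffOn ℝ 1 D U)
    (σD : ℝ) (hσD : 0 < σD)
    (hJ : ∀ p ∈ U, ∀ v : EuclideanSpace ℝ (Fin N), σD * ‖v‖ ≤ ‖fderiv ℝ D p v‖)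
    (σφ : ℝ) (hσφ : 0 < σφ)
    (H : EuclideanSpace ℝ (Fin N) → ℝ) (hHC1 : ContDiff ℝ 1 H)
    (hHconc : StrongConcaveOn Set.univ σφ H)
    (pstar : EuclideanSpace ℝ (Fin N)) (hpstar : pstar ∈ U)
    (hcrit : gradient H (D pstar) = 0) :
    ∀ p ∈ U,
      σD ^ 2 * σφ * (H (D pstar) - H (D p))
        ≤ (1 / 2) * ‖gradient (fun q => H (D q)) p‖ ^ 2 := by
  intro p hp
  set g : EuclideanSpace ℝ (Fin N) := gradient H (D p) with hg
  -- Step 1: H (D pstar) - H (D p) ≤ ‖g‖² / (2 σφ)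
  have hfoc := strong_concave_foc hHC1 hHconc (D p) (D pstar)
  have hCS : ⟪g, D pstar - D p⟫ ≤ ‖g‖ * ‖D pstar - D p‖ := real_inner_le_norm _ _
  have hstep1 : σφ * (H (D pstar) - H (D p)) ≤ ‖g‖ ^ 2 / 2 := by
    nlinarith [sq_nonneg (‖g‖ - σφ * ‖D pstar - D p‖), norm_nonneg (D pstar - D p),
      norm_nonneg g, sq_nonneg ‖D pstar - D p‖]
  -- Step 2: σD * ‖g‖ ≤ ‖gradient (H ∘ D) p‖
  have hDp : DifferentiableAt ℝ D p :=
    (hD.contDiffAt (hU.mem_nhds hp)).differentiableAt one_ne_zero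
  have hHDp : DifferentiableAt ℝ H (D p) := hHC1.differentiable one_ne_zero (D p)
  set J : EuclideanSpace ℝ (Fin N) →L[ℝ] EuclideanSpace ℝ (Fin N) := fderiv ℝ D p with hJdef
  have hinj : Function.Injective (J : EuclideanSpace ℝ (Fin N) →ₗ[ℝ] EuclideanSpace ℝ (Fin N)) := by
    rw [← LinearMap.ker_eq_bot, LinearMap.ker_eq_bot']
    intro m hm
    have := hJ p hp m
    rw [show J m = 0 from hm] at this
    simp only [norm_zero] at this
    have : ‖m‖ ≤ 0 := by
      by_contra h
      push_neg at h
      nlinarith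
    simpa [le_antisymm this (norm_nonneg m)] using norm_le_zero_iff.mp this
  have hsurj : Function.Surjective
      (J : EuclideanSpace ℝ (Fin N) →ₗ[ℝ] EuclideanSpace ℝ (Fin N)) :=
    (LinearMap.injective_iff_surjective).mp hinj
  obtain ⟨v, hvJ⟩ := hsurj g
  have hvJ' : J v = g := hvJ
  -- chain rule
  have hGdiff : DifferentiableAt ℝ (fun q => H (D q)) p := hHDp.comp p hDp
  have hcomp : fderiv ℝ (fun q => H (D q)) p = (fderiv ℝ H (D p)).comp J :=
    fderiv_comp p hHDp hDp
  have hkey : ⟪gradient (fun q => H (D q)) p, v⟫ = ‖g‖ ^ 2 := by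
    rw [inner_gradient_eq, hcomp]
    have : (fderiv ℝ H (D p)) (J v) = ⟪g, J v⟫ := (inner_gradient_eq H (D p) (J v)).symm
    simp only [ContinuousLinearMap.comp_apply]
    rw [this, hvJ', real_inner_self_eq_norm_sq]
  have hvg : σD * ‖v‖ ≤ ‖g‖ := by
    have := hJ p hp v
    rwa [← hJdef, hvJ'] at this
  have hCS2 : ‖g‖ ^ 2 ≤ ‖gradient (fun q => H (D q)) p‖ * ‖v‖ := by
    rw [← hkey]; exact real_inner_le_norm _ _
  have hstep2 : σD * ‖g‖ ≤ ‖gradient (fun q => H (D q)) p‖ := by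
    rcases eq_or_lt_of_le (norm_nonneg g) with h0 | h0
    · rw [← h0, mul_zero]; exact norm_nonneg _
    · have hv0 : 0 < ‖v‖ := by
        by_contra h
        push_neg at h
        have : ‖v‖ = 0 := le_antisymm h (norm_nonneg v)
        have : v = 0 := norm_eq_zero.mp this
        rw [this, map_zero] at hvJ'
        rw [← hvJ'] at h0
        simp at h0
      have h1 : σD * ‖g‖ * ‖v‖ ≤ ‖g‖ * ‖g‖ := by nlinarith
      have h2 : ‖g‖ * ‖g‖ ≤ ‖gradient (fun q => H (D q)) p‖ * ‖v‖ := by nlinarith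
      have := le_trans h1 h2
      exact le_of_mul_le_mul_right this hv0
  -- combine
  have hgradnn : (0:ℝ) ≤ ‖gradient (fun q => H (D q)) p‖ := norm_nonneg _
  nlinarith [sq_nonneg (σD * ‖g‖), norm_nonneg g, mul_le_mul_of_nonneg_left hstep1 (sq_nonneg σD),
    mul_self_le_mul_self (by positivity : (0:ℝ) ≤ σD * ‖g‖) hstep2]
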